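/- For all natural numbers n, l and real x, y, t, the Rainville-type generating function holds: Σ_{n=0}^∞ (t^n/n!) H_{n+l}(x,y) = H_l(x + 2 y t, y) · exp(x t + y t²). -/

import Mathlib

open Real Finset

noncomputable def hermite2 (n : ℕ) (x y : ℝ) : ℝ :=
  (Nat.factorial n : ℝ) *
    ∑ r ∈ Finset.range (n / 2 + 1),
      x ^ (n - 2 * r) * y ^ r / ((Nat.factorial (n - 2 * r) : ℝ) * (Nat.factorial r : ℝ))

/-- Extended coefficient with indicator. -/
noncomputable def hcoeff (m r : ℕ) : ℝ :=
  if 2 * r ≤ m then (Nat.factorial m : ℝ) / ((Nat.factorial (m - 2 * r) : ℝ) * (Nat.factorial r : ℝ)) else 0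

lemma hermite2_eq_sum (m : ℕ) (x y : ℝ) {M : ℕ} (hM : m / 2 + 1 ≤ M) :
    hermite2 m x y = ∑ r ∈ Finset.range M, hcoeff m r * x ^ (m - 2 * r) * y ^ r := by
  rw [hermite2, Finset.mul_sum]
  rw [← Finset.sum_subset (Finset.range_subset_range.2 hM)]
  · apply Finset.sum_congr rfl
    intro r hr
    have h2 : 2 * r ≤ m := by
      have := Finset.mem_range.1 hr; omega
    rw [hcoeff, if_pos h2]
    ring
  · intro r _ hr
    have h2 : ¬ (2 * r ≤ m) := by
      simp only [Finset.mem_range, not_lt] at hr; omega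
    rw [hcoeff, if_neg h2]
    ring

lemma hcoeff_zero (m : ℕ) : hcoeff m 0 = 1 := by
  simp [hcoeff, div_self, Nat.cast_ne_zero.2 (Nat.factorial_ne_zero m)]

lemma hcoeff_rec (m r : ℕ) :
    hcoeff (m + 2) (r + 1) = hcoeff (m + 1) (r + 1) + 2 * (m + 1) * hcoeff m r := by
  by_cases h : 2 * r ≤ m
  · by_cases h' : 2 * (r + 1) ≤ m + 1
    · -- generic case : m = 2r + 1 + j
      obtain ⟨j, rfl⟩ : ∃ j, m = 2 * r + 1 + j := ⟨m - (2 * r + 1), by omega⟩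
      have e1 : 2 * r + 1 + j + 2 - 2 * (r + 1) = j + 1 := by omega
      have e2 : 2 * r + 1 + j + 1 - 2 * (r + 1) = j := by omega
      have e3 : 2 * r + 1 + j - 2 * r = j + 1 := by omega
      rw [hcoeff, hcoeff, hcoeff, if_pos (by omega), if_pos (by omega), if_pos (by omega),
        e1, e2, e3]
      have keyA : (Nat.factorial (2 * r + 1 + j + 2) : ℝ) =
          ((2 * r + j + 3 : ℕ) : ℝ) * Nat.factorial (2 * r + 1 + j + 1) := by
        rw [show 2 * r + 1 + j + 2 = (2 * r + 1 + j + 1) + 1 by ring, Nat.factorial_succ]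
        push_cast; ring
      have keyB : (Nat.factorial (2 * r + 1 + j + 1) : ℝ) =
          ((2 * r + j + 2 : ℕ) : ℝ) * Nat.factorial (2 * r + 1 + j) := by
        rw [show 2 * r + 1 + j + 1 = (2 * r + 1 + j) + 1 by ring, Nat.factorial_succ]
        push_cast; ring
      have hj : (Nat.factorial (j + 1) : ℝ) = (j + 1) * Nat.factorial j := by
        rw [Nat.factorial_succ]; push_cast; ring
      have hr1 : (Nat.factorial (r + 1) : ℝ) = (r + 1) * Nat.factorial r := by
        rw [Nat.factorial_succ]; push_cast; ring
      have hfj : (Nat.factorial j : ℝ) ≠ 0 := Nat.cast_ne_zero.2 (Nat.factorial_ne_zero j)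
      have hfr : (Nat.factorial r : ℝ) ≠ 0 := Nat.cast_ne_zero.2 (Nat.factorial_ne_zero r)
      have hfB : (Nat.factorial (2 * r + 1 + j) : ℝ) ≠ 0 :=
        Nat.cast_ne_zero.2 (Nat.factorial_ne_zero _)
      rw [keyA, keyB, hj, hr1]
      push_cast
      field_simp
      ring
    · -- boundary : m = 2r, even top term
      obtain rfl : m = 2 * r := by omega
      rw [hcoeff, hcoeff, hcoeff, if_pos (by omega), if_neg (by omega), if_pos (by omega)]
      have e1 : 2 * r + 2 - 2 * (r + 1) = 0 := by omega
      have e2 : 2 * r - 2 * r = 0 := by omega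
      rw [e1, e2]
      have key : (Nat.factorial (2 * r + 2) : ℝ) =
          (2 * (r:ℝ) + 2) * ((2 * (r:ℝ) + 1) * Nat.factorial (2 * r)) := by
        rw [show 2 * r + 2 = (2 * r + 1) + 1 by ring, Nat.factorial_succ, Nat.factorial_succ]
        push_cast; ring
      have hr1 : (Nat.factorial (r + 1) : ℝ) = (r + 1) * Nat.factorial r := by
        rw [Nat.factorial_succ]; push_cast; ring
      have hfr : (Nat.factorial r : ℝ) ≠ 0 := Nat.cast_ne_zero.2 (Nat.factorial_ne_zero r)
      have hf2r : (Nat.factorial (2 * r) : ℝ) ≠ 0 :=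
        Nat.cast_ne_zero.2 (Nat.factorial_ne_zero _)
      rw [key, hr1]
      push_cast
      field_simp
      ring
  · rw [hcoeff, hcoeff, hcoeff, if_neg (by omega), if_neg (by omega), if_neg (by omega)]
    ring

/-- Three-term recurrence for the two-variable Hermite polynomials. -/
lemma hermite2_rec (m : ℕ) (x y : ℝ) :
    hermite2 (m + 2) x y = x * hermite2 (m + 1) x y + 2 * (m + 1) * y * hermite2 m x y := by
  have hM2 : (m + 2) / 2 + 1 ≤ m / 2 + 2 := by omega
  have hM1 : (m + 1) / 2 + 1 ≤ m / 2 + 2 := by omega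
  have hM0 : m / 2 + 1 ≤ m / 2 + 1 := le_refl _
  rw [hermite2_eq_sum (m + 2) x y hM2, hermite2_eq_sum (m + 1) x y hM1,
    hermite2_eq_sum m x y hM0]
  rw [show m / 2 + 2 = (m / 2 + 1) + 1 by ring]
  rw [Finset.sum_range_succ' (fun r => hcoeff (m+2) r * x ^ (m + 2 - 2 * r) * y ^ r),
    Finset.sum_range_succ' (fun r => hcoeff (m+1) r * x ^ (m + 1 - 2 * r) * y ^ r)]
  simp only [hcoeff_rec, hcoeff_zero]
  have e0 : ∀ r : ℕ, m + 2 - 2 * (r + 1) = m - 2 * r := by intro r; omega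
  have key : ∀ r : ℕ,
      (hcoeff (m + 1) (r + 1) + 2 * (m + 1) * hcoeff m r) * x ^ (m + 2 - 2 * (r + 1)) * y ^ (r + 1)
      = x * (hcoeff (m + 1) (r + 1) * x ^ (m + 1 - 2 * (r + 1)) * y ^ (r + 1))
        + 2 * (m + 1) * y * (hcoeff m r * x ^ (m - 2 * r) * y ^ r) := by
    intro r
    rw [e0]
    by_cases h : 2 * (r + 1) ≤ m + 1
    · have e1 : m - 2 * r = (m + 1 - 2 * (r + 1)) + 1 := by omega
      rw [e1, pow_succ, pow_succ]
      ring
    · rw [hcoeff, if_neg h]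
      by_cases h2 : 2 * r ≤ m
      · obtain rfl : m = 2 * r := by omega
        have e2 : 2 * r - 2 * r = 0 := by omega
        rw [e2, pow_succ]
        ring
      · rw [hcoeff, if_neg h2]
        ring
  rw [Finset.sum_congr rfl (fun r _ => key r)]
  have ex : x ^ (m + 2 - 2 * 0) = x * x ^ (m + 1 - 2 * 0) := by
    have h1 : m + 2 - 2 * 0 = (m + 1) + 1 := by omega
    have h2 : m + 1 - 2 * 0 = m + 1 := by omega
    rw [h1, h2, pow_succ]; ring
  rw [ex, Finset.sum_add_distrib, ← Finset.mul_sum, ← Finset.mul_sum]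
  ring

lemma hermite2_zero (x y : ℝ) : hermite2 0 x y = 1 := by
  simp [hermite2]

lemma hermite2_one (x y : ℝ) : hermite2 1 x y = x := by
  simp [hermite2]

/-- The base generating function `∑ t^n/n! H_n(x,y) = exp (x t + y t²)`. -/
lemma hermite2_gen (x y t : ℝ) :
    HasSum (fun n : ℕ => t ^ n / (Nat.factorial n : ℝ) * hermite2 n x y)
      (Real.exp (x * t + y * t ^ 2)) := by
  -- product of the two exponential series
  have ha : HasSum (fun j : ℕ => (x * t) ^ j / (Nat.factorial j : ℝ)) (Real.exp (x * t)) := by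
    have := NormedSpace.expSeries_div_hasSum_exp (x * t)
    rwa [← Real.exp_eq_exp_ℝ] at this
  have hb : HasSum (fun r : ℕ => (y * t ^ 2) ^ r / (Nat.factorial r : ℝ))
      (Real.exp (y * t ^ 2)) := by
    have := NormedSpace.expSeries_div_hasSum_exp (y * t ^ 2)
    rwa [← Real.exp_eq_exp_ℝ] at this
  have hsum : Summable (fun z : ℕ × ℕ =>
      ((x * t) ^ z.1 / (Nat.factorial z.1 : ℝ)) * ((y * t ^ 2) ^ z.2 / (Nat.factorial z.2 : ℝ))) := by
    apply summable_mul_of_summable_norm (f := fun j : ℕ => (x * t) ^ j / (Nat.factorial j : ℝ))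
      (g := fun r : ℕ => (y * t ^ 2) ^ r / (Nat.factorial r : ℝ))
    · have : Summable (fun j : ℕ => |x * t| ^ j / (Nat.factorial j : ℝ)) :=
        Real.summable_pow_div_factorial _
      apply this.congr
      intro j
      rw [Real.norm_eq_abs, abs_div, abs_pow, Nat.abs_cast]
    · have : Summable (fun r : ℕ => |y * t ^ 2| ^ r / (Nat.factorial r : ℝ)) :=
        Real.summable_pow_div_factorial _
      apply this.congr
      intro r
      rw [Real.norm_eq_abs, abs_div, abs_pow, Nat.abs_cast]
  have hprod := ha.mul hb hsum
  -- reindex via the equivalence (Σ n, Fin (n/2+1)) ≃ ℕ × ℕ, ⟨n, r⟩ ↦ (n - 2r, r)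
  let e : (Σ n : ℕ, Fin (n / 2 + 1)) ≃ ℕ × ℕ :=
    { toFun := fun p => (p.1 - 2 * (p.2 : ℕ), (p.2 : ℕ))
      invFun := fun q => ⟨q.1 + 2 * q.2, ⟨q.2, by omega⟩⟩
      left_inv := by
        rintro ⟨n, r⟩
        have hr : 2 * (r : ℕ) ≤ n := by have := r.isLt; omega
        have h1 : n - 2 * (r : ℕ) + 2 * (r : ℕ) = n := by omega
        simp only
        refine Sigma.ext (by simpa using h1) ?_
        rw [Fin.heq_ext_iff (by simp [h1])]
      right_inv := by
        rintro ⟨j, r⟩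
        simp }
  have hσ : HasSum (fun p : Σ n : ℕ, Fin (n / 2 + 1) =>
      ((x * t) ^ (p.1 - 2 * (p.2 : ℕ)) / (Nat.factorial (p.1 - 2 * (p.2 : ℕ)) : ℝ)) *
        ((y * t ^ 2) ^ (p.2 : ℕ) / (Nat.factorial (p.2 : ℕ) : ℝ)))
      (Real.exp (x * t) * Real.exp (y * t ^ 2)) := by
    exact e.hasSum_iff.2 hprod
  have hfib : ∀ n : ℕ, HasSum (fun r : Fin (n / 2 + 1) =>
      ((x * t) ^ (n - 2 * (r : ℕ)) / (Nat.factorial (n - 2 * (r : ℕ)) : ℝ)) *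
        ((y * t ^ 2) ^ (r : ℕ) / (Nat.factorial (r : ℕ) : ℝ)))
      (t ^ n / (Nat.factorial n : ℝ) * hermite2 n x y) := by
    intro n
    have := hasSum_fintype (fun r : Fin (n / 2 + 1) =>
      ((x * t) ^ (n - 2 * (r : ℕ)) / (Nat.factorial (n - 2 * (r : ℕ)) : ℝ)) *
        ((y * t ^ 2) ^ (r : ℕ) / (Nat.factorial (r : ℕ) : ℝ)))
    convert this using 1
    rw [Fin.sum_univ_eq_sum_range (fun r : ℕ =>
      ((x * t) ^ (n - 2 * r) / (Nat.factorial (n - 2 * r) : ℝ)) *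
        ((y * t ^ 2) ^ r / (Nat.factorial r : ℝ)))]
    rw [hermite2, ← mul_assoc]
    have hn : t ^ n / (Nat.factorial n : ℝ) * (Nat.factorial n : ℝ) = t ^ n := by
      field_simp
    rw [hn, Finset.mul_sum]
    apply Finset.sum_congr rfl
    intro r hr
    have h2 : 2 * r ≤ n := by have := Finset.mem_range.1 hr; omega
    have ht : t ^ (n - 2 * r) * (t ^ 2) ^ r = t ^ n := by
      rw [← pow_mul, ← pow_add]
      congr 1
      omega
    rw [mul_pow, mul_pow]
    field_simp
    rw [← ht]
    ring
  have := hσ.sigma hfib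
  rwa [← Real.exp_add, show x * t + y * t ^ 2 = x * t + y * t ^ 2 from rfl] at this

/-- Shift lemma: multiply by `n` and downshift the Hermite index. -/
lemma hermite2_shift (x y t : ℝ) (k : ℕ) (S : ℝ)
    (h : HasSum (fun n : ℕ => t ^ n / (Nat.factorial n : ℝ) * hermite2 (n + k) x y) S) :
    HasSum (fun n : ℕ => (n : ℝ) * (t ^ n / (Nat.factorial n : ℝ) * hermite2 (n - 1 + k) x y))
      (t * S) := by
  set g : ℕ → ℝ := fun n => (n : ℝ) * (t ^ n / (Nat.factorial n : ℝ) * hermite2 (n - 1 + k) x y)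
    with hg
  have key : HasSum (fun n : ℕ => g (n + 1)) (t * S) := by
    have h' := h.mul_left t
    apply h'.congr_fun
    intro n
    simp only [hg]
    have e1 : n + 1 - 1 + k = n + k := by omega
    rw [e1]
    rw [Nat.factorial_succ, pow_succ]
    push_cast
    have hfn : (Nat.factorial n : ℝ) ≠ 0 := Nat.cast_ne_zero.2 (Nat.factorial_ne_zero n)
    field_simp
  have := (hasSum_nat_add_iff (f := g) 1).1 key
  simpa [hg] using this

theorem hermite2_rainville (l : ℕ) (x y t : ℝ) :
    HasSum (fun n : ℕ => t ^ n / (Nat.factorial n : ℝ) * hermite2 (n + l) x y)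
      (hermite2 l (x + 2 * y * t) y * Real.exp (x * t + y * t ^ 2)) := by
  set E := Real.exp (x * t + y * t ^ 2) with hE
  set X := x + 2 * y * t with hX
  -- prove P l ∧ P (l+1) by induction on l
  suffices H : ∀ l : ℕ,
      HasSum (fun n : ℕ => t ^ n / (Nat.factorial n : ℝ) * hermite2 (n + l) x y)
        (hermite2 l X y * E) ∧
      HasSum (fun n : ℕ => t ^ n / (Nat.factorial n : ℝ) * hermite2 (n + (l + 1)) x y)
        (hermite2 (l + 1) X y * E) by
    exact (H l).1
  intro l
  induction l with
  | zero =>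
    constructor
    · have h0 := hermite2_gen x y t
      simpa [hermite2_zero] using h0
    · -- P 1
      have h0 := hermite2_gen x y t
      have h1 : HasSum (fun n : ℕ => x * (t ^ n / (Nat.factorial n : ℝ) * hermite2 n x y))
          (x * E) := h0.mul_left x
      have h0' : HasSum (fun n : ℕ => t ^ n / (Nat.factorial n : ℝ) * hermite2 (n + 0) x y) E := by
        simpa using h0
      have h2 := (hermite2_shift x y t 0 E h0').mul_left (2 * y)
      have h3 := h1.add h2
      have heq : ∀ n : ℕ,
          x * (t ^ n / (Nat.factorial n : ℝ) * hermite2 n x y) +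
            2 * y * ((n : ℝ) * (t ^ n / (Nat.factorial n : ℝ) * hermite2 (n - 1 + 0) x y))
          = t ^ n / (Nat.factorial n : ℝ) * hermite2 (n + 1) x y := by
        intro n
        match n with
        | 0 => simp [hermite2_zero, hermite2_one]
        | Nat.succ m =>
          have e1 : m + 1 - 1 + 0 = m := by omega
          rw [e1]
          rw [show m + 1 + 1 = m + 2 by ring, hermite2_rec m x y]
          push_cast
          ring
      have h4 := h3.congr_fun (fun n => (heq n).symm)
      have hval : x * E + 2 * y * (t * E) = hermite2 (0 + 1) X y * E := by
        rw [show (0:ℕ) + 1 = 1 from rfl, hermite2_one, hX]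
        ring
      rwa [hval] at h4
  | succ l ih =>
    obtain ⟨hP, hP1⟩ := ih
    refine ⟨hP1, ?_⟩
    -- step : P (l+2) from P l and P (l+1)
    have h1 : HasSum (fun n : ℕ => x * (t ^ n / (Nat.factorial n : ℝ) * hermite2 (n + (l + 1)) x y))
        (x * (hermite2 (l + 1) X y * E)) := hP1.mul_left x
    have h2 := (hermite2_shift x y t (l + 1) _ hP1).mul_left (2 * y)
    have h3 : HasSum (fun n : ℕ =>
        2 * y * ((l : ℝ) + 1) * (t ^ n / (Nat.factorial n : ℝ) * hermite2 (n + l) x y))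
        (2 * y * ((l : ℝ) + 1) * (hermite2 l X y * E)) := hP.mul_left _
    have h4 := (h1.add h2).add h3
    have heq : ∀ n : ℕ,
        x * (t ^ n / (Nat.factorial n : ℝ) * hermite2 (n + (l + 1)) x y) +
          2 * y * ((n : ℝ) * (t ^ n / (Nat.factorial n : ℝ) * hermite2 (n - 1 + (l + 1)) x y)) +
          2 * y * ((l : ℝ) + 1) * (t ^ n / (Nat.factorial n : ℝ) * hermite2 (n + l) x y)
        = t ^ n / (Nat.factorial n : ℝ) * hermite2 (n + (l + 1 + 1)) x y := by
      intro n
      have e1 : n - 1 + (l + 1) = n + l ∨ n = 0 := by omega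
      have e2 : n + (l + 1 + 1) = (n + l) + 2 := by omega
      rw [e2, hermite2_rec (n + l) x y]
      rcases e1 with h | h
      · rw [h]
        push_cast
        ring
      · subst h
        push_cast
        ring
    have h5 := h4.congr_fun (fun n => (heq n).symm)
    have hval : x * (hermite2 (l + 1) X y * E) + 2 * y * (t * (hermite2 (l + 1) X y * E)) +
        2 * y * ((l : ℝ) + 1) * (hermite2 l X y * E) = hermite2 (l + 1 + 1) X y * E := by
      rw [show l + 1 + 1 = l + 2 by ring, hermite2_rec l X y, hX]
      push_cast
      ring
    rwa [hval] at h5
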